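/- For every x > 0, u(x) > 1 − x/(e^x − 1). -/

import Mathlib

open Filter Real

noncomputable section

open Finset

lemma alt_sum_pow (m : ℕ) : ∀ n : ℕ, m < n →
    ∑ k ∈ Finset.range (n+1), (-1:ℝ)^k * (n.choose k : ℝ) * (k:ℝ)^m = 0 := by
  induction m using Nat.strong_induction_on with
  | _ m ih =>
    intro n hmn
    match m, n with
    | 0, n =>
      have h := add_pow (-1 : ℝ) 1 n
      simp only [one_pow, mul_one, neg_add_cancel] at h
      rw [zero_pow (by omega : n ≠ 0)] at h
      simp only [pow_zero, mul_one]
      exact h.symm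
    | m+1, n+1 =>
      -- drop k = 0 term, shift index
      rw [Finset.sum_range_succ']
      have hz : ((0:ℕ):ℝ)^(m+1) = 0 := by
        norm_num
      rw [hz, mul_zero, add_zero]
      -- now sum over j of (-1)^(j+1) * choose (n+1) (j+1) * (j+1)^(m+1)
      have key : ∀ j : ℕ, (-1:ℝ)^(j+1) * ((n+1).choose (j+1) : ℝ) * ((j+1:ℕ):ℝ)^(m+1)
          = -((n:ℝ)+1) * ((-1:ℝ)^j * (n.choose j : ℝ) *
              (∑ i ∈ Finset.range (m+1), (m.choose i : ℝ) * (j:ℝ)^i)) := by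
        intro j
        have hc : ((j:ℝ)+1) * ((n+1).choose (j+1) : ℝ) = ((n:ℝ)+1) * (n.choose j : ℝ) := by
          have := Nat.add_one_mul_choose_eq n j
          have h2 : ((n.succ * n.choose j : ℕ) : ℝ) = (((n+1).choose (j+1) * (j+1) : ℕ) : ℝ) := by
            rw [this]
          push_cast at h2
          push_cast
          linarith
        have hb : ((j:ℝ)+1)^(m+1) = ((j:ℝ)+1) * ∑ i ∈ Finset.range (m+1), (m.choose i : ℝ) * (j:ℝ)^i := by
          have h := add_pow (j:ℝ) 1 m
          simp only [one_pow, mul_one] at h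
          rw [pow_succ, h, Finset.sum_mul, Finset.mul_sum]
          exact Finset.sum_congr rfl fun i _ => by ring
        push_cast
        calc (-1:ℝ)^(j+1) * ((n+1).choose (j+1) : ℝ) * ((j:ℝ)+1)^(m+1)
            = (-1:ℝ)^(j+1) * (((j:ℝ)+1) * ((n+1).choose (j+1):ℝ)) *
              (∑ i ∈ Finset.range (m+1), (m.choose i : ℝ) * (j:ℝ)^i) := by rw [hb]; ring
          _ = (-1:ℝ)^(j+1) * (((n:ℝ)+1) * (n.choose j : ℝ)) *
              (∑ i ∈ Finset.range (m+1), (m.choose i : ℝ) * (j:ℝ)^i) := by rw [hc]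
          _ = _ := by rw [pow_succ]; ring
      rw [Finset.sum_congr rfl (fun j _ => key j)]
      rw [← Finset.mul_sum]
      -- swap: sum over j of (-1)^j choose * sum over i
      have swap : ∑ j ∈ Finset.range (n+1), (-1:ℝ)^j * (n.choose j : ℝ) *
          (∑ i ∈ Finset.range (m+1), (m.choose i : ℝ) * (j:ℝ)^i)
          = ∑ i ∈ Finset.range (m+1), (m.choose i : ℝ) *
              (∑ j ∈ Finset.range (n+1), (-1:ℝ)^j * (n.choose j : ℝ) * (j:ℝ)^i) := by
        simp_rw [Finset.mul_sum]
        rw [Finset.sum_comm]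
        exact Finset.sum_congr rfl fun i _ => Finset.sum_congr rfl fun j _ => by ring
      rw [swap]
      have : ∀ i ∈ Finset.range (m+1), (m.choose i : ℝ) *
          (∑ j ∈ Finset.range (n+1), (-1:ℝ)^j * (n.choose j : ℝ) * (j:ℝ)^i) = 0 := by
        intro i hi
        have hi' : i < m + 1 := Finset.mem_range.mp hi
        rw [ih i hi' n (by omega), mul_zero]
      rw [Finset.sum_congr rfl this, Finset.sum_const_zero, mul_zero]

/-- coefficient `(k+1)^{k-1}/(k+1)!` written without zpow -/
def aco (k : ℕ) : ℝ := ((k:ℝ)+1)^k / (((k:ℝ)+1) * (Nat.factorial (k+1) : ℝ))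

lemma aco_pos (k : ℕ) : 0 < aco k := by
  apply div_pos (pow_pos (by positivity) _)
  positivity

lemma Dsum_zero (n : ℕ) (hn : 2 ≤ n) :
    ∑ k ∈ Finset.range (n+1), aco k * (-((k:ℝ)+1))^(n-k) / (Nat.factorial (n-k) : ℝ) = 0 := by
  have h0 := alt_sum_pow (n-1) (n+1) (by omega)
  rw [Finset.sum_range_succ'] at h0
  have hz : ((0:ℕ):ℝ)^(n-1) = 0 := by
    rw [Nat.cast_zero]; exact zero_pow (by omega)
  rw [hz, mul_zero, add_zero] at h0
  have key : ∀ k ∈ Finset.range (n+1),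
      aco k * (-((k:ℝ)+1))^(n-k) / (Nat.factorial (n-k) : ℝ)
      = ((-1:ℝ)^(n+1) / (Nat.factorial (n+1) : ℝ)) *
        ((-1:ℝ)^(k+1) * ((n+1).choose (k+1) : ℝ) * (((k+1:ℕ)):ℝ)^(n-1)) := by
    intro k hk
    have hkn : k ≤ n := Nat.lt_succ_iff.mp (Finset.mem_range.mp hk)
    have hfac : (Nat.factorial (n+1) : ℝ)
        = ((n+1).choose (k+1) : ℝ) * (Nat.factorial (k+1) : ℝ) * (Nat.factorial (n-k) : ℝ) := by
      have h := Nat.choose_mul_factorial_mul_factorial (show k+1 ≤ n+1 by omega)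
      have h2 : n + 1 - (k+1) = n - k := by omega
      rw [h2] at h
      exact_mod_cast h.symm
    have h2 : (-1:ℝ)^(k+1) * (-1:ℝ)^(k+1) = 1 := by
      rw [← pow_add]
      exact Even.neg_one_pow ⟨k+1, by ring⟩
    have h1 : (-1:ℝ)^(n-k) * (-1:ℝ)^(k+1) = (-1:ℝ)^(n+1) := by
      rw [← pow_add]; congr 1; omega
    have hsign : (-1:ℝ)^(n-k) = (-1:ℝ)^(n+1) * (-1:ℝ)^(k+1) := by
      calc (-1:ℝ)^(n-k) = (-1:ℝ)^(n-k) * ((-1:ℝ)^(k+1) * (-1:ℝ)^(k+1)) := by rw [h2, mul_one]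
        _ = (-1:ℝ)^(n+1) * (-1:ℝ)^(k+1) := by rw [← mul_assoc, h1]
    have hnegpow : (-((k:ℝ)+1))^(n-k) = (-1:ℝ)^(n-k) * ((k:ℝ)+1)^(n-k) := neg_pow _ _
    have hpow : ((k:ℝ)+1)^k * ((k:ℝ)+1)^(n-k) = ((k:ℝ)+1)^(n-1) * ((k:ℝ)+1) := by
      rw [← pow_add, ← pow_succ]
      congr 1
      omega
    have hk1 : ((k:ℝ)+1) ≠ 0 := by positivity
    have hf1 : (Nat.factorial (k+1) : ℝ) ≠ 0 := by exact_mod_cast (Nat.factorial_pos _).ne'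
    have hf2 : (Nat.factorial (n-k) : ℝ) ≠ 0 := by exact_mod_cast (Nat.factorial_pos _).ne'
    have hC : ((n+1).choose (k+1) : ℝ) ≠ 0 := by
      exact_mod_cast (Nat.choose_pos (show k+1 ≤ n+1 by omega)).ne'
    rw [hnegpow, hsign, aco]
    push_cast
    calc ((k:ℝ)+1)^k / (((k:ℝ)+1) * (Nat.factorial (k+1) : ℝ)) *
          ((-1:ℝ)^(n+1) * (-1:ℝ)^(k+1) * ((k:ℝ)+1)^(n-k)) / (Nat.factorial (n-k) : ℝ)
        = (-1:ℝ)^(n+1) * (-1:ℝ)^(k+1) * (((k:ℝ)+1)^k * ((k:ℝ)+1)^(n-k)) /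
            (((k:ℝ)+1) * (Nat.factorial (k+1) : ℝ) * (Nat.factorial (n-k) : ℝ)) := by
          field_simp
      _ = (-1:ℝ)^(n+1) * (-1:ℝ)^(k+1) * (((k:ℝ)+1)^(n-1) * ((k:ℝ)+1)) /
            (((k:ℝ)+1) * (Nat.factorial (k+1) : ℝ) * (Nat.factorial (n-k) : ℝ)) := by rw [hpow]
      _ = (-1:ℝ)^(n+1) * (-1:ℝ)^(k+1) * ((k:ℝ)+1)^(n-1) /
            ((Nat.factorial (k+1) : ℝ) * (Nat.factorial (n-k) : ℝ)) := by
          field_simp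
      _ = ((-1:ℝ)^(n+1) / (Nat.factorial (n+1) : ℝ)) *
          ((-1:ℝ)^(k+1) * ((n+1).choose (k+1) : ℝ) * ((k:ℝ)+1)^(n-1)) := by
          rw [hfac]
          field_simp
  rw [Finset.sum_congr rfl key, ← Finset.mul_sum, h0, mul_zero]

def Ftree (t : ℝ) : ℝ := ∑' k : ℕ, aco k * t^(k+1)

lemma pow_le_exp_factorial (n : ℕ) : (n:ℝ)^n ≤ Real.exp 1 ^ n * (Nat.factorial n : ℝ) := by
  have h := Real.pow_div_factorial_le_exp (x := (n:ℝ)) (by positivity) n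
  have h2 : Real.exp (n:ℝ) = Real.exp 1 ^ n := by
    rw [← Real.exp_nat_mul]; norm_num
  rw [h2] at h
  have hf : (0:ℝ) < (Nat.factorial n : ℝ) := by positivity
  have := mul_le_mul_of_nonneg_right h hf.le
  calc (n:ℝ)^n = ((n:ℝ)^n / (Nat.factorial n : ℝ)) * (Nat.factorial n : ℝ) := by field_simp
    _ ≤ Real.exp 1 ^ n * (Nat.factorial n : ℝ) := this

lemma aco_le (k : ℕ) : aco k ≤ Real.exp 1 ^ (k+1) := by
  have hb := pow_le_exp_factorial (k+1)
  push_cast at hb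
  rw [aco, div_le_iff₀ (by positivity)]
  have h1 : (1:ℝ) ≤ ((k:ℝ)+1) := by norm_num
  have hkpos : (0:ℝ) < (k:ℝ)+1 := by positivity
  have hfpos : (0:ℝ) < (Nat.factorial (k+1) : ℝ) := by positivity
  have h2 : ((k:ℝ)+1)^k * ((k:ℝ)+1) = ((k:ℝ)+1)^(k+1) := (pow_succ _ _).symm
  calc ((k:ℝ)+1)^k ≤ ((k:ℝ)+1)^k * ((k:ℝ)+1) :=
        le_mul_of_one_le_right (pow_nonneg hkpos.le k) h1
    _ = ((k:ℝ)+1)^(k+1) := h2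
    _ ≤ Real.exp 1 ^ (k+1) * (Nat.factorial (k+1) : ℝ) := hb
    _ ≤ Real.exp 1 ^ (k+1) * (((k:ℝ)+1) * (Nat.factorial (k+1) : ℝ)) :=
        mul_le_mul_of_nonneg_left (le_mul_of_one_le_left hfpos.le h1)
          (pow_pos (Real.exp_pos 1) (k+1)).le

lemma aco_term_le (k : ℕ) {r : ℝ} (hr : 0 ≤ r) :
    aco k * r^(k+1) ≤ (Real.exp 1 * r)^(k+1) := by
  rw [mul_pow]
  exact mul_le_mul_of_nonneg_right (aco_le k) (pow_nonneg hr _)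

lemma exp_12_lt : Real.exp 1.2 < 3.4 := by
  have h1 : Real.exp 1 < 2.7182818286 := Real.exp_one_lt_d9
  have h2 : Real.exp (-0.2) > 0.8 := by
    have := Real.add_one_lt_exp (show (-0.2:ℝ) ≠ 0 by norm_num)
    linarith
  have h3 : Real.exp 0.2 < 1.25 := by
    have he : Real.exp 0.2 = (Real.exp (-0.2))⁻¹ := by
      rw [← Real.exp_neg]; norm_num
    rw [he]
    rw [inv_lt_iff_one_lt_mul₀ (Real.exp_pos _)]
    nlinarith
  have : Real.exp 1.2 = Real.exp 1 * Real.exp 0.2 := by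
    rw [← Real.exp_add]; norm_num
  rw [this]
  nlinarith [Real.exp_pos (0.2:ℝ), (Real.exp_pos (1:ℝ))]

set_option maxHeartbeats 1000000 in
lemma tsum_prod_eq_tsum_antidiagonal {f : ℕ × ℕ → ℝ} (h : Summable f) :
    ∑' p : ℕ × ℕ, f p = ∑' n : ℕ, ∑ kl ∈ Finset.HasAntidiagonal.antidiagonal n, f kl := by
  conv_rhs => congr; ext; rw [← Finset.sum_finset_coe, ← tsum_fintype (L := SummationFilter.unconditional _)]
  rw [← Finset.HasAntidiagonal.sigmaAntidiagonalEquivProd.tsum_eq f]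
  exact Summable.tsum_sigma' (fun n => (hasSum_fintype _).summable)
    (Finset.HasAntidiagonal.sigmaAntidiagonalEquivProd.summable_iff.mpr h)

set_option maxHeartbeats 1000000 in
lemma smallx {x : ℝ} (hx0 : 0 < x) (hx : x ≤ 1/5) :
    Ftree (x * Real.exp (-x)) = x - x^2/2 := by
  set q : ℝ := Real.exp 1 * (x * Real.exp x) with hq
  have hq0 : 0 ≤ q := by positivity
  have hq1 : q < 1 := by
    have h1 : q = x * Real.exp (1 + x) := by rw [hq, Real.exp_add]; ring
    have h2 : Real.exp (1 + x) ≤ Real.exp 1.2 := by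
      apply Real.exp_le_exp.mpr; linarith
    have h3 := exp_12_lt
    have h4 : x * Real.exp (1+x) ≤ (1/5 : ℝ) * 3.4 := by
      have := Real.exp_pos (1+x)
      nlinarith
    rw [h1]; linarith
  set f : ℕ × ℕ → ℝ := fun p =>
    aco p.1 * x^(p.1+1) * ((-((p.1:ℝ)+1)*x)^p.2 / (Nat.factorial p.2 : ℝ)) with hf
  set g : ℕ × ℕ → ℝ := fun p =>
    aco p.1 * x^(p.1+1) * (((((p.1:ℝ)+1)*x))^p.2 / (Nat.factorial p.2 : ℝ)) with hg
  have hnorm : ∀ p : ℕ × ℕ, ‖f p‖ = g p := by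
    rintro ⟨k, j⟩
    simp only [hf, hg, Real.norm_eq_abs, abs_mul, abs_div, abs_pow, abs_neg]
    rw [abs_of_nonneg (aco_pos k).le, abs_of_nonneg hx0.le,
      abs_of_nonneg (show (0:ℝ) ≤ (k:ℝ)+1 by positivity), Nat.abs_cast]
  -- summability of g
  have hgslice : ∀ k : ℕ, Summable (fun j => g (k, j)) := by
    intro k
    exact (Real.summable_pow_div_factorial ((((k:ℝ)+1)*x))).mul_left (aco k * x^(k+1))
  have hgsum : ∀ k : ℕ, ∑' j, g (k, j) = aco k * x^(k+1) * Real.exp (((k:ℝ)+1)*x) := by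
    intro k
    simp only [hg]
    rw [tsum_mul_left]
    congr 1
    rw [Real.exp_eq_exp_ℝ]
    exact (NormedSpace.expSeries_div_hasSum_exp _).tsum_eq
  have hbound : ∀ k : ℕ, aco k * x^(k+1) * Real.exp (((k:ℝ)+1)*x) ≤ q^(k+1) := by
    intro k
    have he : Real.exp (((k:ℝ)+1)*x) = Real.exp x ^ (k+1) := by
      rw [show ((k:ℝ)+1) = ((k+1:ℕ):ℝ) by push_cast; ring, Real.exp_nat_mul]
    rw [he, mul_assoc, ← mul_pow]
    calc aco k * (x * Real.exp x)^(k+1) ≤ (Real.exp 1 * (x * Real.exp x))^(k+1) :=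
          aco_term_le k (by positivity)
      _ = q^(k+1) := by rw [hq]
  have hqsummable : Summable (fun k : ℕ => q^(k+1)) := by
    have := (summable_geometric_of_lt_one hq0 hq1).mul_left q
    exact this.congr (fun n => (pow_succ' q n).symm)
  have hgnn : ∀ p : ℕ × ℕ, 0 ≤ g p := by
    rintro ⟨k, j⟩
    simp only [hg]
    exact mul_nonneg (mul_nonneg (aco_pos k).le (pow_nonneg hx0.le _))
      (div_nonneg (pow_nonneg (by positivity) _) (by positivity))
  have hgS : Summable g := by
    refine (summable_prod_of_nonneg hgnn).mpr ⟨hgslice, ?_⟩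
    apply Summable.of_nonneg_of_le (fun k => ?_) (fun k => ?_) hqsummable
    · rw [hgsum k]
      exact mul_nonneg (mul_nonneg (aco_pos k).le (pow_nonneg hx0.le _)) (Real.exp_pos _).le
    · rw [hgsum k]; exact hbound k
  have hfS : Summable f := by
    apply Summable.of_norm
    exact hgS.congr (fun p => (hnorm p).symm)
  -- first evaluation: tsum f = Ftree (x * exp (-x))
  have hfslice : ∀ k : ℕ, Summable (fun j => f (k, j)) := by
    intro k
    exact (Real.summable_pow_div_factorial ((-((k:ℝ)+1)*x))).mul_left (aco k * x^(k+1))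
  have hfsum : ∀ k : ℕ, ∑' j, f (k, j) = aco k * (x * Real.exp (-x))^(k+1) := by
    intro k
    simp only [hf]
    rw [tsum_mul_left]
    have : ∑' (j : ℕ), (-((k:ℝ)+1)*x)^j / (Nat.factorial j : ℝ) = Real.exp (-((k:ℝ)+1)*x) := by
      rw [Real.exp_eq_exp_ℝ]
      exact (NormedSpace.expSeries_div_hasSum_exp _).tsum_eq
    rw [this]
    have he : Real.exp (-((k:ℝ)+1)*x) = Real.exp (-x) ^ (k+1) := by
      rw [show (-((k:ℝ)+1)*x) = ((k+1:ℕ):ℝ) * (-x) by push_cast; ring, Real.exp_nat_mul]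
    rw [he, mul_pow]
    ring
  have heval1 : ∑' p : ℕ × ℕ, f p = Ftree (x * Real.exp (-x)) := by
    rw [Summable.tsum_prod' hfS hfslice]
    rw [Ftree]
    exact tsum_congr hfsum
  -- second evaluation via antidiagonal
  have heval2 : ∑' p : ℕ × ℕ, f p = x - x^2/2 := by
    rw [tsum_prod_eq_tsum_antidiagonal hfS]
    have hrow : ∀ n : ℕ, ∑ kl ∈ Finset.HasAntidiagonal.antidiagonal n, f kl
        = (∑ k ∈ Finset.range (n+1), aco k * (-((k:ℝ)+1))^(n-k) / (Nat.factorial (n-k) : ℝ))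
            * x^(n+1) := by
      intro n
      rw [Finset.Nat.sum_antidiagonal_eq_sum_range_succ_mk, Finset.sum_mul]
      refine Finset.sum_congr rfl (fun k hk => ?_)
      have hkn : k ≤ n := Nat.lt_succ_iff.mp (Finset.mem_range.mp hk)
      simp only [hf]
      rw [mul_pow (-((k:ℝ)+1)) x (n-k)]
      have hxp : x^(k+1) * x^(n-k) = x^(n+1) := by
        rw [← pow_add]; congr 1; omega
      rw [show aco k * x^(k+1) * ((-((k:ℝ)+1))^(n-k) * x^(n-k) / (Nat.factorial (n-k) : ℝ))
          = aco k * (-((k:ℝ)+1))^(n-k) / (Nat.factorial (n-k) : ℝ) * (x^(k+1) * x^(n-k)) from by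
            ring, hxp]
    rw [tsum_congr hrow]
    rw [tsum_eq_sum (s := ({0, 1} : Finset ℕ)) ?_]
    · norm_num [Finset.sum_range_succ, aco, Nat.factorial]
      ring
    · intro n hn
      have hn2 : 2 ≤ n := by
        simp only [Finset.mem_insert, Finset.mem_singleton] at hn
        omega
      rw [Dsum_zero n hn2, zero_mul]
  rw [← heval1, heval2]

def coefF : ℕ → ℝ := fun n => if n = 0 then 0 else aco (n-1)

lemma coefF_nonneg (n : ℕ) : 0 ≤ coefF n := by
  unfold coefF; split
  · exact le_refl 0
  · exact (aco_pos _).le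

lemma coefF_le (n : ℕ) : coefF n ≤ Real.exp 1 ^ n := by
  unfold coefF; split
  · positivity
  · calc aco (n-1) ≤ Real.exp 1 ^ (n-1+1) := aco_le _
      _ ≤ Real.exp 1 ^ n := by
          apply le_of_eq; congr 1; omega

def pF : FormalMultilinearSeries ℝ ℝ ℝ := FormalMultilinearSeries.ofScalars ℝ coefF

def rinv : NNReal := Real.toNNReal (Real.exp 1)⁻¹

lemma rinv_coe : (rinv : ℝ) = (Real.exp 1)⁻¹ :=
  Real.coe_toNNReal _ (by positivity)

lemma inv_exp_le_radius : (rinv : ENNReal) ≤ pF.radius := by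
  apply FormalMultilinearSeries.le_radius_of_bound _ 1
  intro n
  rw [pF, FormalMultilinearSeries.ofScalars_norm]
  have h1 : ‖coefF n‖ = coefF n := abs_of_nonneg (coefF_nonneg n)
  rw [h1, rinv_coe]
  calc coefF n * ((Real.exp 1)⁻¹)^n ≤ Real.exp 1 ^ n * ((Real.exp 1)⁻¹)^n :=
        mul_le_mul_of_nonneg_right (coefF_le n) (by positivity)
    _ = 1 := by rw [← mul_pow]; simp [mul_inv_cancel₀ (Real.exp_pos 1).ne']

lemma summable_coefF {t : ℝ} (ht : |t| < (Real.exp 1)⁻¹) :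
    Summable (fun n : ℕ => coefF n * t^n) := by
  have hr1 : Real.exp 1 * |t| < 1 := by
    have h := mul_lt_mul_of_pos_left ht (Real.exp_pos 1)
    rwa [mul_inv_cancel₀ (Real.exp_pos 1).ne'] at h
  apply Summable.of_norm
  apply Summable.of_nonneg_of_le (fun n => norm_nonneg _) (fun n => ?_)
    (summable_geometric_of_lt_one (r := Real.exp 1 * |t|) (by positivity) hr1)
  rw [norm_mul, norm_pow, Real.norm_eq_abs, Real.norm_eq_abs,
    abs_of_nonneg (coefF_nonneg n), mul_pow]
  exact mul_le_mul_of_nonneg_right (coefF_le n) (by positivity)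

lemma pF_sum_eq {t : ℝ} (ht : |t| < (Real.exp 1)⁻¹) : pF.sum t = Ftree t := by
  have h1 : pF.sum t = ∑' n : ℕ, coefF n * t^n := by
    rw [pF]
    have := FormalMultilinearSeries.ofScalars_sum_eq (E := ℝ) coefF t
    rw [show (FormalMultilinearSeries.ofScalars ℝ coefF).sum t
        = FormalMultilinearSeries.ofScalarsSum coefF t from rfl, this]
    simp [smul_eq_mul]
  rw [h1, Summable.tsum_eq_zero_add (summable_coefF ht)]
  simp only [coefF]
  norm_num
  rfl

lemma analyticAt_Ftree {t : ℝ} (ht : |t| < (Real.exp 1)⁻¹) : AnalyticAt ℝ Ftree t := by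
  have h0 : (0 : ENNReal) < (rinv : ENNReal) := by
    rw [ENNReal.coe_pos, ← NNReal.coe_pos, rinv_coe]
    positivity
  have hrad : 0 < pF.radius := lt_of_lt_of_le h0 inv_exp_le_radius
  have hball := pF.hasFPowerSeriesOnBall hrad
  have hmem : t ∈ EMetric.ball (0:ℝ) pF.radius := by
    change edist t (0:ℝ) < pF.radius
    rw [edist_dist, dist_zero_right, Real.norm_eq_abs]
    apply lt_of_lt_of_le _ inv_exp_le_radius
    rw [← ENNReal.ofReal_coe_nnreal, ENNReal.ofReal_lt_ofReal_iff (by rw [rinv_coe]; positivity)]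
    rwa [rinv_coe]
  have hA : AnalyticAt ℝ pF.sum t := hball.analyticAt_of_mem hmem
  apply hA.congr
  have hopen : IsOpen {s : ℝ | |s| < (Real.exp 1)⁻¹} :=
    isOpen_Iio.preimage continuous_abs
  filter_upwards [hopen.mem_nhds ht] with s hs
  exact pF_sum_eq hs

lemma abs_xexp_lt {z : ℝ} (hz : z ∈ Set.Ioo (-(1/5):ℝ) 1) :
    |z * Real.exp (-z)| < (Real.exp 1)⁻¹ := by
  obtain ⟨h1, h2⟩ := hz
  rcases le_or_gt 0 z with hz0 | hz0
  · rw [abs_of_nonneg (by positivity)]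
    have hne : z - 1 ≠ 0 := sub_ne_zero.mpr (ne_of_lt h2)
    have h3 : z < Real.exp (z - 1) := by
      have := Real.add_one_lt_exp hne
      linarith
    calc z * Real.exp (-z) < Real.exp (z-1) * Real.exp (-z) :=
          mul_lt_mul_of_pos_right h3 (Real.exp_pos _)
      _ = (Real.exp 1)⁻¹ := by rw [← Real.exp_add, ← Real.exp_neg]; congr 1; ring
  · rw [abs_of_nonpos (by nlinarith [Real.exp_pos (-z)]), ← neg_mul]
    have h4 : Real.exp (-z) < Real.exp (1/5) := by
      apply Real.exp_lt_exp.mpr; linarith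
    have h5 : -z * Real.exp (-z) < (1/5) * Real.exp (1/5) := by
      nlinarith [Real.exp_pos (-z)]
    have h7 : Real.exp 1 * Real.exp (1/5) < 3.4 := by
      rw [← Real.exp_add]
      calc Real.exp (1 + 1/5) = Real.exp 1.2 := by norm_num
        _ < 3.4 := exp_12_lt
    have h6 : (1/5 : ℝ) * Real.exp (1/5) < (Real.exp 1)⁻¹ := by
      rw [show (Real.exp 1)⁻¹ = 1 / Real.exp 1 by ring, lt_div_iff₀ (Real.exp_pos 1)]
      nlinarith [Real.exp_pos (1/5 : ℝ)]
    linarith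

lemma Ftree_eq {x : ℝ} (hx0 : 0 < x) (hx1 : x < 1) :
    Ftree (x * Real.exp (-x)) = x - x^2/2 := by
  have hP : AnalyticOnNhd ℝ (fun z => Ftree (z * Real.exp (-z))) (Set.Ioo (-(1/5):ℝ) 1) := by
    intro z hz
    have hg : AnalyticAt ℝ (fun z : ℝ => z * Real.exp (-z)) z :=
      (analyticAt_id).mul ((analyticAt_id).neg.rexp)
    show AnalyticAt ℝ (Ftree ∘ fun z : ℝ => z * Real.exp (-z)) z
    exact AnalyticAt.comp (f := fun z : ℝ => z * Real.exp (-z))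
      (analyticAt_Ftree (abs_xexp_lt hz)) hg
  have hQ : AnalyticOnNhd ℝ (fun z : ℝ => z - z^2/2) (Set.Ioo (-(1/5):ℝ) 1) := by
    intro z hz
    exact (analyticAt_id).sub
      (((analyticAt_id).pow 2).div analyticAt_const (by norm_num))
  have heq := hP.eqOn_of_preconnected_of_eventuallyEq hQ
    (isPreconnected_Ioo) (show (1/10 : ℝ) ∈ Set.Ioo (-(1/5):ℝ) 1 by norm_num) ?_
  · exact heq (show x ∈ Set.Ioo (-(1/5):ℝ) 1 by constructor <;> nlinarith)
  · filter_upwards [Ioo_mem_nhds (show (0:ℝ) < 1/10 by norm_num)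
      (show (1/10:ℝ) < 1/5 by norm_num)] with y hy
    exact smallx hy.1 hy.2.le

lemma aco_exp_le (k : ℕ) : aco k * ((Real.exp 1)⁻¹)^(k+1) ≤ 1/((k:ℝ)+1)^2 := by
  have hb := pow_le_exp_factorial (k+1)
  push_cast at hb
  have hE : (0:ℝ) < Real.exp 1 ^ (k+1) := by positivity
  have key : ((k:ℝ)+1)^k * ((k:ℝ)+1) ≤ Real.exp 1^(k+1) * (Nat.factorial (k+1):ℝ) := by
    rw [← pow_succ]; exact hb
  rw [aco, inv_pow, div_mul_eq_mul_div, div_le_div_iff₀ (by positivity) (by positivity), one_mul]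
  calc ((k:ℝ)+1)^k * (Real.exp 1^(k+1))⁻¹ * ((k:ℝ)+1)^2
      = (((k:ℝ)+1)^k * ((k:ℝ)+1)) * ((k:ℝ)+1) * (Real.exp 1^(k+1))⁻¹ := by ring
    _ ≤ (Real.exp 1^(k+1) * (Nat.factorial (k+1):ℝ)) * ((k:ℝ)+1) * (Real.exp 1^(k+1))⁻¹ := by
        have h := mul_le_mul_of_nonneg_right
          (mul_le_mul_of_nonneg_right key (by positivity : (0:ℝ) ≤ (k:ℝ)+1))
          (by positivity : (0:ℝ) ≤ (Real.exp 1^(k+1))⁻¹)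
        exact h
    _ = (((k:ℝ)+1) * (Nat.factorial (k+1):ℝ)) * (Real.exp 1^(k+1) * (Real.exp 1^(k+1))⁻¹) := by
        ring
    _ = ((k:ℝ)+1) * (Nat.factorial (k+1):ℝ) := by
        rw [mul_inv_cancel₀ hE.ne', mul_one]

lemma summable_inv_sq : Summable (fun k : ℕ => 1/((k:ℝ)+1)^2) := by
  have h := summable_one_div_nat_pow.mpr (by norm_num : 1 < 2)
  have h2 := (summable_nat_add_iff 1).mpr h
  apply h2.congr
  intro n
  push_cast
  ring

lemma summable_aco_t {t : ℝ} (ht0 : 0 ≤ t) (ht : t ≤ (Real.exp 1)⁻¹) :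
    Summable (fun k : ℕ => aco k * t^(k+1)) := by
  apply Summable.of_nonneg_of_le
    (fun k => mul_nonneg (aco_pos k).le (pow_nonneg ht0 _)) (fun k => ?_) summable_inv_sq
  calc aco k * t^(k+1) ≤ aco k * ((Real.exp 1)⁻¹)^(k+1) := by
        exact mul_le_mul_of_nonneg_left (pow_le_pow_left₀ ht0 ht _) (aco_pos k).le
    _ ≤ 1/((k:ℝ)+1)^2 := aco_exp_le k

lemma Ftree_le_half : Ftree ((Real.exp 1)⁻¹) ≤ 1/2 := by
  rw [Ftree]
  apply Summable.tsum_le_of_sum_le (summable_aco_t (by positivity) le_rfl)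
  intro s
  have hne : (nhdsWithin (1:ℝ) (Set.Ioo 0 1)).NeBot :=
    right_nhdsWithin_Ioo_neBot (by norm_num)
  have hφcont : Continuous (fun z : ℝ => ∑ k ∈ s, aco k * (z * Real.exp (-z))^(k+1)) := by
    fun_prop
  have hlim1 : Tendsto (fun z : ℝ => ∑ k ∈ s, aco k * (z * Real.exp (-z))^(k+1))
      (nhdsWithin 1 (Set.Ioo 0 1))
      (nhds (∑ k ∈ s, aco k * ((1:ℝ) * Real.exp (-1))^(k+1))) :=
    (hφcont.tendsto 1).mono_left nhdsWithin_le_nhds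
  have hlim2 : Tendsto (fun z : ℝ => z - z^2/2) (nhdsWithin 1 (Set.Ioo 0 1))
      (nhds (1/2)) := by
    have hc : Continuous (fun z : ℝ => z - z^2/2) := by fun_prop
    have hval : (1:ℝ) - 1^2/2 = 1/2 := by norm_num
    exact hval ▸ ((hc.tendsto 1).mono_left nhdsWithin_le_nhds)
  have hev : ∀ᶠ z in nhdsWithin 1 (Set.Ioo 0 1),
      (∑ k ∈ s, aco k * (z * Real.exp (-z))^(k+1)) ≤ z - z^2/2 := by
    filter_upwards [self_mem_nhdsWithin] with z hz
    rw [← Ftree_eq hz.1 hz.2]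
    have hznn : (0:ℝ) ≤ z * Real.exp (-z) := by
      have := hz.1
      positivity
    have habs := abs_xexp_lt (z := z) ⟨by linarith [hz.1], hz.2⟩
    rw [abs_of_nonneg hznn] at habs
    exact Summable.sum_le_tsum s (fun k _ => mul_nonneg (aco_pos k).le (pow_nonneg hznn _))
      (summable_aco_t hznn habs.le)
  have hfinal := le_of_tendsto_of_tendsto hlim1 hlim2 hev
  calc ∑ k ∈ s, aco k * ((Real.exp 1)⁻¹)^(k+1)
      = ∑ k ∈ s, aco k * ((1:ℝ) * Real.exp (-1))^(k+1) := by
        congr 1; ext k; rw [one_mul, Real.exp_neg]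
    _ ≤ 1/2 := hfinal

lemma hasDerivA (y : ℝ) : HasDerivAt (fun z : ℝ => z + 1 - Real.exp z + z^2/2*Real.exp z)
    (1 + Real.exp y * (y + y^2/2 - 1)) y := by
  have h1 : HasDerivAt (fun z : ℝ => z + 1) 1 y := (hasDerivAt_id y).add_const 1
  have h2 : HasDerivAt Real.exp (Real.exp y) y := Real.hasDerivAt_exp y
  have h3 : HasDerivAt (fun z : ℝ => z^2/2) y y := by
    have := (hasDerivAt_pow 2 y).div_const 2
    simpa using this
  have h4 : HasDerivAt (fun z : ℝ => z^2/2*Real.exp z) (y*Real.exp y + y^2/2*Real.exp y) y :=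
    h3.mul h2
  have htot := (h1.sub h2).add h4
  exact htot.congr_deriv (by ring)

lemma Apos {x : ℝ} (hx : 0 < x) : 0 < x + 1 - Real.exp x + x^2/2*Real.exp x := by
  have hmono : StrictMonoOn (fun z : ℝ => z + 1 - Real.exp z + z^2/2*Real.exp z) (Set.Ici 0) := by
    apply strictMonoOn_of_deriv_pos (convex_Ici 0)
    · fun_prop
    · intro y hy
      rw [interior_Ici] at hy
      rw [(hasDerivA y).deriv]
      rcases le_or_gt (1 - y - y^2/2) 0 with h | h
      · have : 0 ≤ Real.exp y * (y + y^2/2 - 1) := by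
          apply mul_nonneg (Real.exp_pos y).le
          linarith
        linarith
      · have hy1 : y < 1 := by nlinarith [sq_nonneg y, hy]
        have hxy : 1 - y < Real.exp (-y) := by
          have := Real.add_one_lt_exp (show -y ≠ 0 by simp; exact (ne_of_gt hy))
          linarith
        have h2 : Real.exp y * (1 - y) < 1 := by
          have h3 := mul_lt_mul_of_pos_left hxy (Real.exp_pos y)
          rwa [← Real.exp_add, add_neg_cancel, Real.exp_zero] at h3
        nlinarith [Real.exp_pos y, mul_nonneg (sq_nonneg y) (Real.exp_pos y).le]
  have h0 : (0:ℝ) ∈ Set.Ici (0:ℝ) := Set.self_mem_Ici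
  have hx' : x ∈ Set.Ici (0:ℝ) := Set.mem_Ici.mpr hx.le
  have := hmono h0 hx' hx
  simpa [Real.exp_zero] using this

lemma core {x : ℝ} (hx : 0 < x) : (x - x^2/2) * (Real.exp x - 1) < x^2 := by
  have hderivφ : ∀ y : ℝ, HasDerivAt (fun z : ℝ => z^2 - (z - z^2/2)*(Real.exp z - 1))
      (y + 1 - Real.exp y + y^2/2*Real.exp y) y := by
    intro y
    have h5 : HasDerivAt (fun z : ℝ => z^2) (2*y) y := by
      simpa using hasDerivAt_pow 2 y
    have h3 : HasDerivAt (fun z : ℝ => z^2/2) y y := by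
      have := (hasDerivAt_pow 2 y).div_const 2
      simpa using this
    have h6 : HasDerivAt (fun z : ℝ => z - z^2/2) (1 - y) y := (hasDerivAt_id y).sub h3
    have h7 : HasDerivAt (fun z : ℝ => Real.exp z - 1) (Real.exp y) y :=
      (Real.hasDerivAt_exp y).sub_const 1
    have h8 := h6.mul h7
    have htot := h5.sub h8
    exact htot.congr_deriv (by ring)
  have hmono : StrictMonoOn (fun z : ℝ => z^2 - (z - z^2/2)*(Real.exp z - 1)) (Set.Ici 0) := by
    apply strictMonoOn_of_deriv_pos (convex_Ici 0)
    · fun_prop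
    · intro y hy
      rw [interior_Ici] at hy
      rw [(hderivφ y).deriv]
      exact Apos hy
  have h0 : (0:ℝ) ∈ Set.Ici (0:ℝ) := Set.self_mem_Ici
  have hx' : x ∈ Set.Ici (0:ℝ) := Set.mem_Ici.mpr hx.le
  have := hmono h0 hx' hx
  simp only [Real.exp_zero] at this
  nlinarith [this]

/-- The function `u` of Theorem 0: `u(c) = 1 - Σ_{k≥1} (1/c) (k^{k-2}/k!) (c e^{-c})^k`. -/
def u : ℝ → ℝ := fun c =>
  1 - ∑' k : ℕ, (1 / c) * (((k : ℝ) + 1) ^ ((k : ℤ) - 1) / (Nat.factorial (k + 1))) *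
      (c * Real.exp (-c)) ^ (k + 1)

lemma u_eq (c : ℝ) : u c = 1 - (1/c) * Ftree (c * Real.exp (-c)) := by
  rw [u, Ftree, ← tsum_mul_left]
  congr 1
  apply tsum_congr
  intro k
  have hz : ((k:ℝ)+1)^((k:ℤ)-1) = ((k:ℝ)+1)^k * ((k:ℝ)+1)⁻¹ := by
    rw [zpow_sub_one₀ (by positivity : ((k:ℝ)+1) ≠ 0), zpow_natCast]
  rw [hz, ← div_eq_mul_inv, div_div, aco]
  ring


/-- `u(x) > 1 - x/(e^x - 1)` for every `x > 0`. -/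
theorem statement10 : ∀ x : ℝ, 0 < x → 1 - x / (Real.exp x - 1) < u x := by
  intro x hx
  have hexp : 0 < Real.exp x - 1 := by
    nlinarith [Real.add_one_lt_exp (ne_of_gt hx)]
  rw [u_eq]
  rcases lt_trichotomy x 1 with h1 | h1 | h1
  · rw [Ftree_eq hx h1]
    have he : (1/x) * (x - x^2/2) = 1 - x/2 := by field_simp
    rw [he]
    have hc := core hx
    have h2 : 1 - x/2 < x / (Real.exp x - 1) := by
      rw [lt_div_iff₀ hexp]
      nlinarith [hc]
    linarith
  · subst h1
    have h2 : (1:ℝ) * Real.exp (-1) = (Real.exp 1)⁻¹ := by rw [one_mul, Real.exp_neg]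
    rw [h2]
    have h3 := Ftree_le_half
    have h4 : Real.exp 1 < 3 := lt_trans Real.exp_one_lt_d9 (by norm_num)
    have h5 : (1:ℝ)/2 < 1/(Real.exp 1 - 1) := by
      rw [lt_div_iff₀ (by linarith)]
      nlinarith
    have h6 : (1:ℝ)/1 = 1 := by norm_num
    rw [h6]
    linarith
  · have hne : x - 1 ≠ 0 := ne_of_gt (by linarith)
    have hxe : x * Real.exp (-x) < Real.exp (-1) := by
      have h3 : x < Real.exp (x-1) := by
        have := Real.add_one_lt_exp hne
        linarith
      calc x * Real.exp (-x) < Real.exp (x-1) * Real.exp (-x) :=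
            mul_lt_mul_of_pos_right h3 (Real.exp_pos _)
        _ = Real.exp (-1) := by rw [← Real.exp_add]; congr 1; ring
    have hcont : ContinuousOn (fun t : ℝ => t * Real.exp (-t)) (Set.Icc 0 1) := by fun_prop
    have himg := intermediate_value_Ioo (by norm_num : (0:ℝ) ≤ 1) hcont
    have hmem : x * Real.exp (-x) ∈
        Set.Ioo ((0:ℝ) * Real.exp (-(0:ℝ))) ((1:ℝ) * Real.exp (-(1:ℝ))) := by
      constructor
      · simp only [zero_mul]
        positivity
      · rw [one_mul]
        exact hxe
    obtain ⟨y, hy, hyeq⟩ := himg hmem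
    obtain ⟨hy0, hy1⟩ := hy
    rw [← hyeq, Ftree_eq hy0 hy1]
    have hxy : y * Real.exp x = x * Real.exp y := by
      have h : y * Real.exp (-y) = x * Real.exp (-x) := hyeq
      rw [Real.exp_neg, Real.exp_neg] at h
      field_simp at h
      linarith [h]
    have hcore := core hy0
    have hA : 0 < y - y^2/2 := by nlinarith
    have h1' : (y - y^2/2) * Real.exp y < y^2 + (y - y^2/2) := by nlinarith [hcore]
    have h2' : (y - y^2/2) * Real.exp x * y = ((y - y^2/2) * Real.exp y) * x := by
      calc (y - y^2/2) * Real.exp x * y = (y - y^2/2) * (y * Real.exp x) := by ring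
        _ = (y - y^2/2) * (x * Real.exp y) := by rw [hxy]
        _ = _ := by ring
    have h3' : (y - y^2/2) * Real.exp x * y < (y^2 + (y - y^2/2)) * x := by
      rw [h2']
      exact mul_lt_mul_of_pos_right h1' (by linarith)
    have hpoly : (y^2 + (y - y^2/2)) * x - (y - y^2/2) * y ≤ x^2 * y := by
      nlinarith [mul_nonneg (mul_nonneg (show (0:ℝ) ≤ x - y by linarith)
        (show (0:ℝ) ≤ 2*x + y - 2 by linarith)) hy0.le]
    have h4' : (y - y^2/2) * (Real.exp x - 1) * y < x^2 * y := by
      have hexpand : (y - y^2/2) * (Real.exp x - 1) * y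
          = (y - y^2/2) * Real.exp x * y - (y - y^2/2) * y := by ring
      rw [hexpand]
      linarith [h3', hpoly]
    have h5' : (y - y^2/2) * (Real.exp x - 1) < x^2 :=
      lt_of_mul_lt_mul_right h4' hy0.le
    have h6' : (1/x) * (y - y^2/2) < x / (Real.exp x - 1) := by
      rw [one_div_mul_eq_div, div_lt_div_iff₀ hx hexp]
      nlinarith [h5']
    linarith
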